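/- Let M be a lattice, ℓ ∈ M a primitive vector, and w ∈ M. Suppose there exists k ∈ M with k·ℓ = 0 and k·w = 1. Then the subgroup L = ℤℓ + ℤw is a primitive sublattice of M: whenever r·v ∈ L for some nonzero integer r and some v ∈ M, one has v ∈ L. -/

import Mathlib

/-- Let `M` be a lattice, `ℓ ∈ M` a primitive vector, and `w ∈ M`.
Suppose there exists `k ∈ M` with `k·ℓ = 0` and `k·w = 1`. Then the subgroup
`L = ℤℓ + ℤw` is a primitive sublattice of `M`: whenever `r·v ∈ L` for some nonzero
integer `r` and some `v ∈ M`, one has `v ∈ L`. -/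
theorem statement4
    {M : Type*} [AddCommGroup M] [Module ℤ M] [Module.Free ℤ M] [Module.Finite ℤ M]
    (B : M →ₗ[ℤ] M →ₗ[ℤ] ℤ)
    (hsymm : ∀ x y : M, B x y = B y x)
    (hnondeg : ∀ x : M, (∀ y : M, B x y = 0) → x = 0)
    (ℓ w : M)
    (hprim : ∀ (c : ℤ) (x : M), ℓ = c • x → 0 < c → c = 1)
    (k : M) (hkℓ : B k ℓ = 0) (hkw : B k w = 1) :
    ∀ (r : ℤ) (v : M), r ≠ 0 →
      r • v ∈ Submodule.span ℤ ({ℓ, w} : Set M) →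
      v ∈ Submodule.span ℤ ({ℓ, w} : Set M) := by
  -- replace the ℤ-module structure by the canonical one to avoid smul diamonds
  letI := AddCommGroup.uniqueIntModule (M := M)
  obtain rfl : ‹Module ℤ M› = AddCommGroup.toIntModule M := Subsingleton.elim _ _
  -- torsion-freeness from nondegeneracy
  have hcancel : ∀ (c : ℤ) (m : M), c ≠ 0 → c • m = 0 → m = 0 := by
    intro c m hc hcm
    refine hnondeg m fun y => ?_
    have h1 : B (c • m) y = 0 := by rw [hcm]; simp
    have h2 : c * B m y = 0 := by
      simpa [map_smul, smul_eq_mul] using h1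
    exact (mul_eq_zero.mp h2).resolve_left hc
  intro r v hr hmem
  rw [Submodule.mem_span_pair] at hmem ⊢
  obtain ⟨a, b, hab⟩ := hmem
  -- pair with k : b = r * (B k v)
  have hbr : b = r * B k v := by
    have h1 := congrArg (B k) hab
    simpa [map_add, map_smul, hkℓ, hkw, smul_eq_mul, mul_comm] using h1
  have hru : r • (v - B k v • w) = a • ℓ := by
    have h3 : a • ℓ + (r * B k v) • w = r • v := by rw [← hbr]; exact hab
    rw [smul_sub, ← h3, smul_smul]
    abel
  -- show v - (B k v) • w ∈ ℤ ℓ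
  have huℓ : ∃ c : ℤ, v - B k v • w = c • ℓ := by
    by_cases ha : a = 0
    · refine ⟨0, ?_⟩
      have h4 : r • (v - B k v • w) = 0 := by rw [hru, ha, zero_smul]
      rw [hcancel r _ hr h4, zero_smul]
    · have hdpos : 0 < Int.gcd r a := Int.gcd_pos_of_ne_zero_left a hr
      have hd0 : (Int.gcd r a : ℤ) ≠ 0 := by exact_mod_cast hdpos.ne'
      have hr' : r = (Int.gcd r a : ℤ) * (r / (Int.gcd r a : ℤ)) :=
        (Int.mul_ediv_cancel' (Int.gcd_dvd_left r a)).symm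
      have ha' : a = (Int.gcd r a : ℤ) * (a / (Int.gcd r a : ℤ)) :=
        (Int.mul_ediv_cancel' (Int.gcd_dvd_right r a)).symm
      set r' : ℤ := r / (Int.gcd r a : ℤ) with hr'def
      set a' : ℤ := a / (Int.gcd r a : ℤ) with ha'def
      have hr'0 : r' ≠ 0 := by
        intro h; rw [h, mul_zero] at hr'; exact hr hr'
      have hru' : r' • (v - B k v • w) = a' • ℓ := by
        have h2 : (Int.gcd r a : ℤ) • (r' • (v - B k v • w) - a' • ℓ) = 0 := by
          rw [smul_sub, smul_smul, smul_smul, ← hr', ← ha', hru, sub_self]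
        exact sub_eq_zero.mp (hcancel _ _ hd0 h2)
      have hcop : IsCoprime r' a' := by
        rw [Int.isCoprime_iff_gcd_eq_one, hr'def, ha'def]
        exact Int.gcd_div_gcd_div_gcd hdpos
      obtain ⟨s, t, hst⟩ := hcop
      have hℓx : ℓ = r' • (t • (v - B k v • w) + s • ℓ) := by
        rw [smul_add, smul_smul, smul_smul, mul_comm r' t, mul_smul, hru',
          smul_smul, ← add_smul,
          show t * a' + r' * s = s * r' + t * a' from by ring, hst, one_smul]
      have hr'1 : r' = 1 ∨ r' = -1 := by
        rcases lt_or_gt_of_ne hr'0 with h | h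
        · right
          have hneg : ℓ = (-r') • (-(t • (v - B k v • w) + s • ℓ)) := by
            rw [neg_smul_neg]; exact hℓx
          have := hprim _ _ hneg (by linarith)
          linarith
        · left; exact hprim _ _ hℓx h
      rcases hr'1 with h | h
      · refine ⟨a', ?_⟩
        rw [← hru', h, one_smul]
      · refine ⟨-a', ?_⟩
        rw [h] at hru'
        rw [neg_smul, ← hru', neg_smul, one_smul, neg_neg]
  obtain ⟨c, hc⟩ := huℓ
  refine ⟨c, B k v, ?_⟩
  rw [← hc]
  abel
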